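/- Let p > 0 and 0 < η ≤ 1/(4(p+l)). Fix x, z, e ∈ ℝ^{d1} and y, y' ∈ ℝ^{d2}, and set x' := x − η(∇_x f(x,y) + p(x − z) − e). Then f̂(x,y,z) − f̂(x',y',z) ≥ (η/4)‖∇_x f̂(x,y,z)‖² − (η/2 + (p+l)η²)‖e‖² + ⟨∇_y f(x,y), y − y'⟩ − ((p+l)/2)‖y' − y‖², where ∇_x f̂(x,y,z) = ∇_x f(x,y) + p(x − z). -/

import Mathlib

set_option maxHeartbeats 1000000


open Set Metric
open scoped RealInnerProductSpace

noncomputable def gradx {d1 d2 : ℕ}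
    (f : EuclideanSpace ℝ (Fin d1) → EuclideanSpace ℝ (Fin d2) → ℝ)
    (x : EuclideanSpace ℝ (Fin d1)) (y : EuclideanSpace ℝ (Fin d2)) :
    EuclideanSpace ℝ (Fin d1) :=
  gradient (fun x' => f x' y) x

noncomputable def grady {d1 d2 : ℕ}
    (f : EuclideanSpace ℝ (Fin d1) → EuclideanSpace ℝ (Fin d2) → ℝ)
    (x : EuclideanSpace ℝ (Fin d1)) (y : EuclideanSpace ℝ (Fin d2)) :
    EuclideanSpace ℝ (Fin d2) :=
  gradient (fun y' => f x y') y

/-- `f` is differentiable and `l`-smooth: the gradient is `l`-Lipschitz with respect to the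
Euclidean norm on the product space (stated in squared form). -/
def IsLSmooth {d1 d2 : ℕ} (l : ℝ)
    (f : EuclideanSpace ℝ (Fin d1) → EuclideanSpace ℝ (Fin d2) → ℝ) : Prop :=
  Differentiable ℝ (fun w : EuclideanSpace ℝ (Fin d1) × EuclideanSpace ℝ (Fin d2) => f w.1 w.2) ∧
  ∀ x₁ x₂ y₁ y₂,
    ‖gradx f x₁ y₁ - gradx f x₂ y₂‖ ^ 2 + ‖grady f x₁ y₁ - grady f x₂ y₂‖ ^ 2
      ≤ l ^ 2 * (‖x₁ - x₂‖ ^ 2 + ‖y₁ - y₂‖ ^ 2)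

/-- `f̂(x, y, z) = f(x, y) + (p/2)‖x − z‖²`. -/
noncomputable def fhat {d1 d2 : ℕ}
    (f : EuclideanSpace ℝ (Fin d1) → EuclideanSpace ℝ (Fin d2) → ℝ) (p : ℝ)
    (x : EuclideanSpace ℝ (Fin d1)) (y : EuclideanSpace ℝ (Fin d2))
    (z : EuclideanSpace ℝ (Fin d1)) : ℝ :=
  f x y + p / 2 * ‖x - z‖ ^ 2


lemma inner_gradient_eq' {E : Type*} [NormedAddCommGroup E] [InnerProductSpace ℝ E]
    [CompleteSpace E] (g : E → ℝ) (x u : E) :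
    ⟪gradient g x, u⟫ = fderiv ℝ g x u := by
  simp [gradient, InnerProductSpace.toDual_symm_apply]

lemma hasDerivAt_line' {d1 d2 : ℕ}
    (f : EuclideanSpace ℝ (Fin d1) → EuclideanSpace ℝ (Fin d2) → ℝ)
    (hf : Differentiable ℝ
      (fun w : EuclideanSpace ℝ (Fin d1) × EuclideanSpace ℝ (Fin d2) => f w.1 w.2))
    (x u : EuclideanSpace ℝ (Fin d1)) (y v : EuclideanSpace ℝ (Fin d2)) (t : ℝ) :
    HasDerivAt (fun s : ℝ => f (x + s • u) (y + s • v))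
      (⟪gradx f (x + t • u) (y + t • v), u⟫ + ⟪grady f (x + t • u) (y + t • v), v⟫) t := by
  set w : EuclideanSpace ℝ (Fin d1) × EuclideanSpace ℝ (Fin d2) := (x + t • u, y + t • v) with hw
  have hγ : HasDerivAt (fun s : ℝ =>
      ((x + s • u, y + s • v) : EuclideanSpace ℝ (Fin d1) × EuclideanSpace ℝ (Fin d2))) (u, v) t := by
    have h1 : HasDerivAt (fun s : ℝ => x + s • u) u t := by
      simpa using ((hasDerivAt_id t).smul_const u).const_add x
    have h2 : HasDerivAt (fun s : ℝ => y + s • v) v t := by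
      simpa using ((hasDerivAt_id t).smul_const v).const_add y
    exact h1.prodMk h2
  have hD := (hf.differentiableAt (x := w)).hasFDerivAt.comp_hasDerivAt t hγ
  convert hD using 1
  any_goals rfl
  have h1 : HasFDerivAt (fun a => f a w.2)
      ((fderiv ℝ (fun w : EuclideanSpace ℝ (Fin d1) × EuclideanSpace ℝ (Fin d2) => f w.1 w.2) w).comp
        (ContinuousLinearMap.inl ℝ _ _)) w.1 :=
    (hf.differentiableAt).hasFDerivAt.comp w.1 (hasFDerivAt_prodMk_left w.1 w.2)
  have h2 : HasFDerivAt (fun b => f w.1 b)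
      ((fderiv ℝ (fun w : EuclideanSpace ℝ (Fin d1) × EuclideanSpace ℝ (Fin d2) => f w.1 w.2) w).comp
        (ContinuousLinearMap.inr ℝ _ _)) w.2 :=
    (hf.differentiableAt).hasFDerivAt.comp w.2 (hasFDerivAt_prodMk_right w.1 w.2)
  have e1 : ⟪gradx f w.1 w.2, u⟫
      = fderiv ℝ (fun w : EuclideanSpace ℝ (Fin d1) × EuclideanSpace ℝ (Fin d2) => f w.1 w.2) w (u, 0) := by
    rw [show gradx f w.1 w.2 = gradient (fun a => f a w.2) w.1 from rfl,
      inner_gradient_eq', h1.fderiv]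
    rfl
  have e2 : ⟪grady f w.1 w.2, v⟫
      = fderiv ℝ (fun w : EuclideanSpace ℝ (Fin d1) × EuclideanSpace ℝ (Fin d2) => f w.1 w.2) w (0, v) := by
    rw [show grady f w.1 w.2 = gradient (fun b => f w.1 b) w.2 from rfl,
      inner_gradient_eq', h2.fderiv]
    rfl
  rw [show (gradx f (x + t • u) (y + t • v)) = gradx f w.1 w.2 from rfl,
    show (grady f (x + t • u) (y + t • v)) = grady f w.1 w.2 from rfl, e1, e2, ← map_add]
  norm_num

lemma hasDerivAt_quad' {d : ℕ} (p : ℝ) (x u z : EuclideanSpace ℝ (Fin d)) (t : ℝ) :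
    HasDerivAt (fun s : ℝ => p / 2 * ‖x + s • u - z‖ ^ 2)
      (p * ⟪x + t • u - z, u⟫) t := by
  have hc : HasDerivAt (fun s : ℝ => x + s • u - z) u t := by
    simpa using (((hasDerivAt_id t).smul_const u).const_add x).sub_const z
  have h2 := (hc.inner ℝ hc).const_mul (p / 2)
  convert h2 using 1
  any_goals rfl
  · funext s
    rw [real_inner_self_eq_norm_sq]
  · rw [real_inner_comm u (x + t • u - z)]
    ring

/-- Joint descent lemma along a segment. -/
lemma descent_lemma' {d1 d2 : ℕ} (l p : ℝ) (hl : 0 < l) (hp : 0 < p)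
    (f : EuclideanSpace ℝ (Fin d1) → EuclideanSpace ℝ (Fin d2) → ℝ)
    (hf : IsLSmooth l f) (z x u : EuclideanSpace ℝ (Fin d1))
    (y v : EuclideanSpace ℝ (Fin d2)) :
    fhat f p (x + u) (y + v) z ≤ fhat f p x y z
      + (⟪gradx f x y, u⟫ + ⟪grady f x y, v⟫ + p * ⟪x - z, u⟫)
      + (p + l) / 2 * (‖u‖ ^ 2 + ‖v‖ ^ 2) := by
  set D : ℝ → ℝ := fun s =>
    ⟪gradx f (x + s • u) (y + s • v), u⟫ + ⟪grady f (x + s • u) (y + s • v), v⟫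
      + p * ⟪x + s • u - z, u⟫ with hD
  set φ : ℝ → ℝ := fun s => f (x + s • u) (y + s • v) + p / 2 * ‖x + s • u - z‖ ^ 2 with hφ
  have hderiv : ∀ t : ℝ, HasDerivAt φ (D t) t := fun t =>
    (hasDerivAt_line' f hf.1 x u y v t).add (hasDerivAt_quad' p x u z t)
  have hD0 : D 0 = ⟪gradx f x y, u⟫ + ⟪grady f x y, v⟫ + p * ⟪x - z, u⟫ := by
    simp [hD]
  have hLip : ∀ t ∈ Ioo (0:ℝ) 1, D t - D 0 ≤ (p + l) * (‖u‖ ^ 2 + ‖v‖ ^ 2) * t := by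
    intro t ht
    have ht0 : (0:ℝ) < t := ht.1
    set a := gradx f (x + t • u) (y + t • v) - gradx f x y with ha
    set b := grady f (x + t • u) (y + t • v) - grady f x y with hb
    have hsq := hf.2 (x + t • u) x (y + t • v) y
    rw [add_sub_cancel_left, add_sub_cancel_left] at hsq
    have hnorm : ‖t • u‖ ^ 2 = t ^ 2 * ‖u‖ ^ 2 := by
      rw [norm_smul]; simp [abs_of_pos ht0]; ring
    have hnorm' : ‖t • v‖ ^ 2 = t ^ 2 * ‖v‖ ^ 2 := by
      rw [norm_smul]; simp [abs_of_pos ht0]; ring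
    rw [hnorm, hnorm'] at hsq
    have hsq' : ‖a‖ ^ 2 + ‖b‖ ^ 2 ≤ l ^ 2 * t ^ 2 * (‖u‖ ^ 2 + ‖v‖ ^ 2) := by
      rw [← ha, ← hb] at hsq; nlinarith [hsq]
    have hDt : D t - D 0 = ⟪a, u⟫ + ⟪b, v⟫ + p * t * ‖u‖ ^ 2 := by
      have e1 : ⟪a, u⟫ = ⟪gradx f (x + t • u) (y + t • v), u⟫ - ⟪gradx f x y, u⟫ := by
        rw [ha]; exact inner_sub_left _ _ _
      have e2 : ⟪b, v⟫ = ⟪grady f (x + t • u) (y + t • v), v⟫ - ⟪grady f x y, v⟫ := by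
        rw [hb]; exact inner_sub_left _ _ _
      have e3 : ⟪x + t • u - z, u⟫ - ⟪x - z, u⟫ = t * ‖u‖ ^ 2 := by
        rw [← inner_sub_left]
        have h4 : (x + t • u - z) - (x - z) = t • u := by abel
        rw [h4, real_inner_smul_left, real_inner_self_eq_norm_sq]
      have e4 : p * ⟪x + t • u - z, u⟫ - p * ⟪x - z, u⟫ = p * (t * ‖u‖ ^ 2) := by
        rw [← mul_sub, e3]
      rw [hD0]
      simp only [hD]
      linarith [e1, e2, e4]
    rw [hDt]
    have h1 : ⟪a, u⟫ ≤ ‖a‖ * ‖u‖ := real_inner_le_norm a u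
    have h2 : ⟪b, v⟫ ≤ ‖b‖ * ‖v‖ := real_inner_le_norm b v
    have hPnn : (0:ℝ) ≤ ‖a‖ * ‖u‖ + ‖b‖ * ‖v‖ := by positivity
    have hQnn : (0:ℝ) ≤ l * t * (‖u‖ ^ 2 + ‖v‖ ^ 2) := by positivity
    have hcs : ‖a‖ * ‖u‖ + ‖b‖ * ‖v‖ ≤ l * t * (‖u‖ ^ 2 + ‖v‖ ^ 2) := by
      nlinarith [hsq', sq_nonneg (‖a‖ * ‖v‖ - ‖b‖ * ‖u‖), hPnn, hQnn,
        mul_le_mul_of_nonneg_right hsq' (by positivity : (0:ℝ) ≤ ‖u‖ ^ 2 + ‖v‖ ^ 2)]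
    nlinarith [mul_pos hp ht0, sq_nonneg ‖v‖, ht.2, norm_nonneg u, mul_pos hp ht0,
      mul_nonneg (mul_pos hp ht0).le (sq_nonneg ‖v‖)]
  set ψ : ℝ → ℝ := fun t => φ t - t * D 0 - (p + l) * (‖u‖ ^ 2 + ‖v‖ ^ 2) / 2 * t ^ 2 with hψdef
  have hψ : ∀ t : ℝ, HasDerivAt ψ (D t - D 0 - (p + l) * (‖u‖ ^ 2 + ‖v‖ ^ 2) * t) t := by
    intro t
    have h1 := (hderiv t).sub ((hasDerivAt_id t).mul_const (D 0))
    have h2 := (hasDerivAt_pow 2 t).const_mul ((p + l) * (‖u‖ ^ 2 + ‖v‖ ^ 2) / 2)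
    have h3 := h1.sub h2
    convert h3 using 1
    any_goals rfl
    simp
    ring
  have hanti : AntitoneOn ψ (Icc 0 1) := by
    apply antitoneOn_of_deriv_nonpos (convex_Icc 0 1)
    · exact fun t _ => ((hψ t).differentiableAt).continuousAt.continuousWithinAt
    · exact fun t _ => ((hψ t).differentiableAt).differentiableWithinAt
    · intro t ht
      rw [interior_Icc] at ht
      rw [(hψ t).deriv]
      linarith [hLip t ht]
  have hψ10 : ψ 1 ≤ ψ 0 := hanti (left_mem_Icc.mpr zero_le_one) (right_mem_Icc.mpr zero_le_one)
    zero_le_one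
  have hφ0 : φ 0 = fhat f p x y z := by simp [hφ, fhat]
  have hφ1 : φ 1 = fhat f p (x + u) (y + v) z := by simp [hφ, fhat]
  have hfinal : φ 1 ≤ φ 0 + D 0 + (p + l) * (‖u‖ ^ 2 + ‖v‖ ^ 2) / 2 := by
    have h1 : ψ 1 = φ 1 - D 0 - (p + l) * (‖u‖ ^ 2 + ‖v‖ ^ 2) / 2 := by
      simp [hψdef]
    have h0 : ψ 0 = φ 0 := by simp [hψdef]
    rw [h1, h0] at hψ10
    linarith
  rw [hφ0, hφ1, hD0] at hfinal
  linarith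


/-- descent-type inequality for the inexact proximal gradient step in `x`. -/
theorem statement1 {d1 d2 : ℕ} (l p η : ℝ) (hl : 0 < l)
    (f : EuclideanSpace ℝ (Fin d1) → EuclideanSpace ℝ (Fin d2) → ℝ)
    (hf : IsLSmooth l f)
    (hp : 0 < p) (hη : 0 < η) (hη' : η ≤ 1 / (4 * (p + l)))
    (x z e : EuclideanSpace ℝ (Fin d1)) (y y' : EuclideanSpace ℝ (Fin d2)) :
    fhat f p x y z - fhat f p (x - η • (gradx f x y + p • (x - z) - e)) y' z
      ≥ η / 4 * ‖gradx f x y + p • (x - z)‖ ^ 2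
        - (η / 2 + (p + l) * η ^ 2) * ‖e‖ ^ 2
        + ⟪grady f x y, y - y'⟫
        - (p + l) / 2 * ‖y' - y‖ ^ 2 := by
  set G : EuclideanSpace ℝ (Fin d1) := gradx f x y + p • (x - z) with hG
  set u : EuclideanSpace ℝ (Fin d1) := (-η) • (G - e) with hu
  set v : EuclideanSpace ℝ (Fin d2) := y' - y with hv
  have hxu : x + u = x - η • (G - e) := by
    rw [hu, neg_smul, ← sub_eq_add_neg]
  have hyv : y + v = y' := by rw [hv]; abel
  have hdesc := descent_lemma' l p hl hp f hf z x u y v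
  rw [hxu, hyv] at hdesc
  have hGu : ⟪gradx f x y, u⟫ + p * ⟪x - z, u⟫ = ⟪G, u⟫ := by
    rw [hG, inner_add_left, real_inner_smul_left]
  have hGu2 : ⟪G, u⟫ = -η * (‖G‖ ^ 2 - ⟪G, e⟫) := by
    rw [hu, real_inner_smul_right, inner_sub_right, real_inner_self_eq_norm_sq]
  have hu2 : ‖u‖ ^ 2 = η ^ 2 * (‖G‖ ^ 2 - 2 * ⟪G, e⟫ + ‖e‖ ^ 2) := by
    rw [hu, norm_smul]
    have h5 : ‖G - e‖ ^ 2 = ‖G‖ ^ 2 - 2 * ⟪G, e⟫ + ‖e‖ ^ 2 := by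
      rw [@norm_sub_sq_real]
    rw [mul_pow, ← h5]
    simp [abs_of_pos hη]
  have hyy : ⟪grady f x y, y - y'⟫ = -⟪grady f x y, v⟫ := by
    rw [hv, ← inner_neg_right]
    congr 1
    abel
  have hs : 2 * ⟪G, e⟫ ≤ ‖G‖ ^ 2 + ‖e‖ ^ 2 := by
    have h0 : (0:ℝ) ≤ ‖G - e‖ ^ 2 := sq_nonneg _
    rw [@norm_sub_sq_real] at h0
    linarith
  have hLη : (p + l) * η ≤ 1 / 4 := by
    have hpl : (0:ℝ) < 4 * (p + l) := by linarith
    rw [le_div_iff₀ hpl] at hη'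
    linarith
  have hcoef : 0 ≤ η / 2 - (p + l) * η ^ 2 / 2 := by nlinarith
  have hkey : 0 ≤ (η / 2 - (p + l) * η ^ 2 / 2) * (‖G‖ ^ 2 + ‖e‖ ^ 2 - 2 * ⟪G, e⟫) :=
    mul_nonneg hcoef (by linarith)
  have hG2 : 0 ≤ η * ‖G‖ ^ 2 := by positivity
  have hE2 : 0 ≤ (p + l) * η ^ 2 * ‖e‖ ^ 2 := by positivity
  have hdesc2 : fhat f p x y z - fhat f p (x - η • (G - e)) y' z
      ≥ -(-η * (‖G‖ ^ 2 - ⟪G, e⟫)) - ⟪grady f x y, v⟫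
        - (p + l) / 2 * (η ^ 2 * (‖G‖ ^ 2 - 2 * ⟪G, e⟫ + ‖e‖ ^ 2) + ‖v‖ ^ 2) := by
    rw [← hu2, ← hGu2]
    linarith [hdesc, hGu]
  rw [hyy]
  nlinarith [hdesc2, hkey, hG2, hE2]
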